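/- Let k_1, k_2 ≥ 1 and m ≥ 0 be integers, let g, h : ℍ → ℂ be holomorphic functions, and let γ ∈ SL₂(ℝ). Then [g, h]_m |_{k_1+k_2+2m} γ = [ g|_{k_1}γ , h|_{k_2}γ ]_m. -/

import Mathlib

open Complex BigOperators

noncomputable section

/-- The upper half-plane ℍ, viewed as a subset of ℂ. -/
def UpperHalf : Set ℂ := {z : ℂ | 0 < z.im}

/-- The differential operator `D = (1/(2πi)) d/dz`. -/
def Dop (f : ℂ → ℂ) : ℂ → ℂ := fun z => (1 / (2 * (Real.pi : ℂ) * I)) * deriv f z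

/-- The `n`-th Hecke operator in weight `k`:
`(T_n^{(k)} f)(z) = n^{k-1} Σ_{d|n} d^{-k} Σ_{b=0}^{d-1} f((nz + bd)/d²)`. -/
def hecke (k : ℤ) (n : ℕ) (f : ℂ → ℂ) : ℂ → ℂ := fun z =>
  (n : ℂ) ^ (k - 1) * ∑ d ∈ n.divisors, (d : ℂ) ^ (-k) *
    ∑ b ∈ Finset.range d, f (((n : ℂ) * z + (b : ℂ) * (d : ℂ)) / ((d : ℂ) ^ 2))

/-- `σ_k(m) = Σ_{d|m} d^k`. -/
def sigmaFn (k m : ℕ) : ℕ := ∑ d ∈ m.divisors, d ^ k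

/-- The Eisenstein series `E_k(z) = 1 − (2k/B_k) Σ_{m≥1} σ_{k−1}(m) q^m`, `q = e^{2πiz}`. -/
def Eis (k : ℕ) : ℂ → ℂ := fun z =>
  1 - (2 * (k : ℂ) / ((bernoulli k : ℚ) : ℂ)) *
    ∑' m : ℕ, ((sigmaFn (k - 1) (m + 1) : ℕ) : ℂ) *
      Complex.exp (2 * (Real.pi : ℂ) * I * z) ^ (m + 1)

/-- The nearly holomorphic Eisenstein series `E_2*(z) = E_2(z) − 3/(π Im z)`. -/
def E2star : ℂ → ℂ := fun z => Eis 2 z - 3 / ((Real.pi : ℂ) * (z.im : ℂ))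

/-- `Δ_12 = (E_4³ − E_6²)/1728`, the discriminant cusp form of weight 12. -/
def Delta12 : ℂ → ℂ := fun z => (Eis 4 z ^ 3 - Eis 6 z ^ 2) / 1728

/-- `Δ_16`, the unique normalized cusp form of weight 16 (equal to `E_4 Δ_12`). -/
def Delta16 : ℂ → ℂ := fun z => Eis 4 z * Delta12 z

/-- `Δ_18`, the unique normalized cusp form of weight 18 (equal to `E_6 Δ_12`). -/
def Delta18 : ℂ → ℂ := fun z => Eis 6 z * Delta12 z

/-- `Δ_20`, the unique normalized cusp form of weight 20 (equal to `E_8 Δ_12`). -/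
def Delta20 : ℂ → ℂ := fun z => Eis 8 z * Delta12 z

/-- `Δ_22`, the unique normalized cusp form of weight 22 (equal to `E_10 Δ_12`). -/
def Delta22 : ℂ → ℂ := fun z => Eis 10 z * Delta12 z

/-- `Δ_26`, the unique normalized cusp form of weight 26 (equal to `E_14 Δ_12`). -/
def Delta26 : ℂ → ℂ := fun z => Eis 14 z * Delta12 z

/-- A quasimodular form of weight `k` on `SL₂(ℤ)`: a ℂ-linear combination of monomials
`E_2^a E_4^b E_6^c` with `2a + 4b + 6c = k` (as a function on the upper half-plane). -/
def IsQuasimodular (k : ℕ) (f : ℂ → ℂ) : Prop :=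
  ∃ (S : Finset (ℕ × ℕ × ℕ)) (c : ℕ × ℕ × ℕ → ℂ),
    (∀ t ∈ S, 2 * t.1 + 4 * t.2.1 + 6 * t.2.2 = k) ∧
    ∀ z ∈ UpperHalf,
      f z = ∑ t ∈ S, c t * Eis 2 z ^ t.1 * Eis 4 z ^ t.2.1 * Eis 6 z ^ t.2.2

/-- A quasimodular form of weight `k` and depth `≤ p`: a ℂ-linear combination of monomials
`E_2^a E_4^b E_6^c` with `2a + 4b + 6c = k` and `a ≤ p`. -/
def IsQuasimodularDepth (k p : ℕ) (f : ℂ → ℂ) : Prop :=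
  ∃ (S : Finset (ℕ × ℕ × ℕ)) (c : ℕ × ℕ × ℕ → ℂ),
    (∀ t ∈ S, 2 * t.1 + 4 * t.2.1 + 6 * t.2.2 = k ∧ t.1 ≤ p) ∧
    ∀ z ∈ UpperHalf,
      f z = ∑ t ∈ S, c t * Eis 2 z ^ t.1 * Eis 4 z ^ t.2.1 * Eis 6 z ^ t.2.2

/-- `f` satisfies the Hecke eigenform equations of weight `k` on ℍ: for every `n ≥ 1`
there is `λ_n ∈ ℂ` with `T_n^{(k)} f = λ_n f` on the upper half-plane. -/
def IsEigenOn (k : ℤ) (f : ℂ → ℂ) : Prop :=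
  ∀ n : ℕ, 1 ≤ n → ∃ c : ℂ, ∀ z ∈ UpperHalf, hecke k n f z = c * f z

/-- An eigenform of weight `k`: a function that is nonzero on ℍ and satisfies the Hecke
eigenform equations of weight `k`. -/
def IsEigenform (k : ℤ) (f : ℂ → ℂ) : Prop :=
  (∃ z ∈ UpperHalf, f z ≠ 0) ∧ IsEigenOn k f

/-- A holomorphic modular form of weight `k` on `SL₂(ℤ)`: holomorphic on ℍ, satisfying the
weight-`k` modular transformation law, and bounded as `Im z → ∞`. -/
def IsModularForm (k : ℤ) (f : ℂ → ℂ) : Prop :=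
  DifferentiableOn ℂ f UpperHalf ∧
  (∀ a b c d : ℤ, a * d - b * c = 1 → ∀ z ∈ UpperHalf,
      f (((a : ℂ) * z + (b : ℂ)) / ((c : ℂ) * z + (d : ℂ))) =
        ((c : ℂ) * z + (d : ℂ)) ^ k * f z) ∧
  ∃ C : ℝ, ∀ z ∈ UpperHalf, 1 ≤ z.im → ‖f z‖ ≤ C

/-- `f` is a nonzero scalar multiple of `F` (as functions on the upper half-plane). -/
def ScalarOf (f F : ℂ → ℂ) : Prop := ∃ c : ℂ, c ≠ 0 ∧ ∀ z ∈ UpperHalf, f z = c * F z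

/-- The unordered pair `{f, g}` equals `{F, G}` up to nonzero scalar multiples. -/
def UPair (f g F G : ℂ → ℂ) : Prop :=
  (ScalarOf f F ∧ ScalarOf g G) ∨ (ScalarOf f G ∧ ScalarOf g F)

/-- The weight-`k` slash action of `γ = (a b; c d) ∈ SL₂(ℝ)`:
`(f|_k γ)(z) = (cz+d)^{−k} f((az+b)/(cz+d))`. -/
def slashAct (k : ℤ) (f : ℂ → ℂ) (a b c d : ℝ) : ℂ → ℂ := fun z =>
  ((c : ℂ) * z + (d : ℂ)) ^ (-k) * f (((a : ℂ) * z + (b : ℂ)) / ((c : ℂ) * z + (d : ℂ)))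

/-- The `m`-th Rankin–Cohen bracket of `g`, `h` in weights `k₁`, `k₂`:
`[g, h]_m(z) = Σ_{r+s=m} (−1)^r C(m+k₁−1, s) C(m+k₂−1, r) (D^r g)(z) (D^s h)(z)`. -/
def RCbracket (k₁ k₂ m : ℕ) (g h : ℂ → ℂ) : ℂ → ℂ := fun z =>
  ∑ r ∈ Finset.range (m + 1),
    (-1 : ℂ) ^ r * ((m + k₁ - 1).choose (m - r) : ℂ) * ((m + k₂ - 1).choose r : ℂ) *
      Dop^[r] g z * Dop^[m - r] h z

open Nat

namespace RC

/-- Möbius map. -/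
def mob (a b c d : ℝ) : ℂ → ℂ := fun z => (((a : ℂ) * z + (b : ℂ)) / ((c : ℂ) * z + (d : ℂ)))

lemma upperHalf_isOpen : IsOpen UpperHalf :=
  isOpen_lt continuous_const Complex.continuous_im

lemma twoPiI_ne : (2 * (Real.pi : ℂ) * I) ≠ 0 := by
  simp [Real.pi_ne_zero, I_ne_zero, Complex.ofReal_ne_zero]

lemma denom_ne {a b c d : ℝ} (hdet : a * d - b * c = 1) {z : ℂ} (hz : z ∈ UpperHalf) :
    (c : ℂ) * z + (d : ℂ) ≠ 0 := by
  intro h0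
  have him : c * z.im = 0 := by
    have := congrArg Complex.im h0
    simpa using this
  have hzim : z.im ≠ 0 := ne_of_gt hz
  have hc : c = 0 := by
    rcases mul_eq_zero.1 him with h | h
    · exact h
    · exact absurd h hzim
  subst hc
  have hd : d = 0 := by
    have := congrArg Complex.re h0
    simpa using this
  subst hd
  simp at hdet

lemma mob_mem {a b c d : ℝ} (hdet : a * d - b * c = 1) {z : ℂ} (hz : z ∈ UpperHalf) :
    mob a b c d z ∈ UpperHalf := by
  have hne := denom_ne hdet hz
  have hnsq : 0 < Complex.normSq ((c : ℂ) * z + (d : ℂ)) :=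
    Complex.normSq_pos.2 hne
  have him : (mob a b c d z).im = z.im / Complex.normSq ((c : ℂ) * z + (d : ℂ)) := by
    rw [mob, Complex.div_im]
    simp only [Complex.add_im, Complex.add_re, Complex.mul_im, Complex.mul_re,
      Complex.ofReal_re, Complex.ofReal_im]
    rw [div_sub_div_same]
    congr 1
    linear_combination z.im * hdet
  show 0 < (mob a b c d z).im
  rw [him]
  exact div_pos hz hnsq

lemma mob_hasDerivAt {a b c d : ℝ} (hdet : a * d - b * c = 1) {z : ℂ}
    (hz : z ∈ UpperHalf) :
    HasDerivAt (mob a b c d) ((((c : ℂ) * z + (d : ℂ)) ^ 2)⁻¹) z := by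
  have hne := denom_ne hdet hz
  have h1 : HasDerivAt (fun z : ℂ => (a : ℂ) * z + (b : ℂ)) (a : ℂ) z := by
    simpa using ((hasDerivAt_id z).const_mul (a : ℂ)).add_const (b : ℂ)
  have h2 : HasDerivAt (fun z : ℂ => (c : ℂ) * z + (d : ℂ)) (c : ℂ) z := by
    simpa using ((hasDerivAt_id z).const_mul (c : ℂ)).add_const (d : ℂ)
  have h := h1.div h2 hne
  refine h.congr_deriv ?_
  have hdetC : (a : ℂ) * d - b * c = 1 := by
    have := congrArg (fun x : ℝ => (x : ℂ)) hdet
    push_cast at this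
    linear_combination this
  rw [inv_eq_one_div, div_left_inj' (pow_ne_zero 2 hne)]
  ring_nf
  linear_combination hdetC

lemma Dop_iter_diffOn {f : ℂ → ℂ} (hf : DifferentiableOn ℂ f UpperHalf) (n : ℕ) :
    DifferentiableOn ℂ (Dop^[n] f) UpperHalf := by
  induction n with
  | zero => simpa using hf
  | succ n ih =>
    rw [Function.iterate_succ_apply']
    have h1 : DifferentiableOn ℂ (deriv (Dop^[n] f)) UpperHalf :=
      ((ih.analyticOnNhd upperHalf_isOpen).deriv).differentiableOn
    exact h1.const_mul _

lemma deriv_Dop_iter (f : ℂ → ℂ) (n : ℕ) (x : ℂ) :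
    deriv (Dop^[n] f) x = (2 * (Real.pi : ℂ) * I) * Dop^[n + 1] f x := by
  rw [Function.iterate_succ_apply']
  show deriv (Dop^[n] f) x = (2 * (Real.pi : ℂ) * I) *
    ((1 / (2 * (Real.pi : ℂ) * I)) * deriv (Dop^[n] f) x)
  field_simp

/-- The coefficient `(k+j)(k+j+1)⋯(k+n-1) · C(n,j)` as a complex number. -/
def Wc (k n j : ℕ) : ℂ := (n.choose j : ℂ) * ((k + n - 1)! : ℂ) / ((k + j - 1)! : ℂ)

lemma fact_ne (n : ℕ) : ((n ! : ℕ) : ℂ) ≠ 0 := by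
  exact_mod_cast Nat.cast_ne_zero.2 (Nat.factorial_ne_zero n)

lemma Wc_self (k n : ℕ) : Wc k n n = 1 := by
  simp [Wc, div_self (fact_ne _)]

lemma Wc_zero_of_lt (k : ℕ) {n j : ℕ} (h : n < j) : Wc k n j = 0 := by
  simp [Wc, Nat.choose_eq_zero_of_lt h]

lemma Wc_succ_zero {k : ℕ} (hk : 1 ≤ k) (n : ℕ) :
    Wc k (n + 1) 0 = Wc k n 0 * ((k : ℂ) + n) := by
  obtain ⟨K, rfl⟩ := Nat.exists_eq_add_of_le hk
  simp only [Wc, Nat.choose_zero_right, Nat.cast_one, one_mul]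
  have h1 : 1 + K + (n + 1) - 1 = (K + n) + 1 := by omega
  have h2 : 1 + K + n - 1 = K + n := by omega
  have h3 : 1 + K + 0 - 1 = K := by omega
  rw [h1, h2, h3, Nat.factorial_succ]
  push_cast
  field_simp
  ring

lemma Wc_rec {k : ℕ} (hk : 1 ≤ k) {n j : ℕ} (hj : j ≤ n) :
    Wc k (n + 1) (j + 1) = Wc k n j + Wc k n (j + 1) * ((k : ℂ) + n + j + 1) := by
  obtain ⟨K, rfl⟩ := Nat.exists_eq_add_of_le hk
  obtain ⟨t, rfl⟩ := Nat.exists_eq_add_of_le hj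
  simp only [Wc]
  have h1 : 1 + K + (j + t + 1) - 1 = K + j + t + 1 := by omega
  have h2 : 1 + K + (j + t) - 1 = K + j + t := by omega
  have h3 : 1 + K + (j + 1) - 1 = K + j + 1 := by omega
  have h4 : 1 + K + j - 1 = K + j := by omega
  have hpas : ((j + t + 1).choose (j + 1) : ℂ) = ((j + t).choose j : ℂ) +
      ((j + t).choose (j + 1) : ℂ) := by
    push_cast [Nat.choose_succ_succ (j + t) j]
    ring
  have hrel : ((j + t).choose (j + 1) : ℂ) * ((j : ℂ) + 1) = ((j + t).choose j : ℂ) * (t : ℂ) := by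
    have h0 := Nat.choose_succ_right_eq (j + t) j
    have h5 : j + t - j = t := by omega
    rw [h5] at h0
    exact_mod_cast congrArg (fun x : ℕ => (x : ℂ)) h0
  have e1 : (((K + j + t + 1)!) : ℂ) = ((K : ℂ) + j + t + 1) * ((K + j + t)! : ℂ) := by
    rw [Nat.factorial_succ]
    push_cast
    ring
  have e2 : (((K + j + 1)!) : ℂ) = ((K : ℂ) + j + 1) * ((K + j)! : ℂ) := by
    rw [Nat.factorial_succ]
    push_cast
    ring
  have hK : ((K + j)! : ℂ) ≠ 0 := fact_ne _
  have hb : ((K : ℂ) + j + 1) ≠ 0 := by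
    have : ((K + j + 1 : ℕ) : ℂ) ≠ 0 := Nat.cast_ne_zero.2 (by omega)
    push_cast at this
    intro h0
    exact this (by linear_combination h0)
  rw [h1, h2, h3, h4, hpas, e1, e2]
  have habs : ∀ x y u v α β γ : ℂ, v ≠ 0 → β ≠ 0 → (x + y) * α = x * β + y * γ →
      (x + y) * (α * u) / (β * v) = x * u / v + y * u / (β * v) * γ := by
    intro x y u v α β γ hv hβ hid
    rw [div_eq_iff (mul_ne_zero hβ hv)]
    linear_combination u * hid - (x * u * β) * mul_inv_cancel₀ hv
      - (y * u * γ) * mul_inv_cancel₀ (mul_ne_zero hβ hv)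
  apply habs _ _ _ _ _ _ _ hK hb
  push_cast
  linear_combination -hrel

lemma regroup (n : ℕ) (A B T : ℕ → ℂ) (h0 : T 0 = A 0) (hA : A (n + 1) = 0)
    (hT : ∀ j < n + 1, T (j + 1) = A (j + 1) + B j) :
    ∑ j ∈ Finset.range (n + 1), A j + ∑ j ∈ Finset.range (n + 1), B j
      = ∑ j ∈ Finset.range (n + 2), T j := by
  rw [Finset.sum_range_succ' T (n + 1), h0]
  have h1 : ∑ j ∈ Finset.range (n + 1), T (j + 1)
      = ∑ j ∈ Finset.range (n + 1), (A (j + 1) + B j) :=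
    Finset.sum_congr rfl (fun j hj => hT j (Finset.mem_range.1 hj))
  rw [h1, Finset.sum_add_distrib, Finset.sum_range_succ' A n]
  have h2 : ∑ j ∈ Finset.range (n + 1), A (j + 1) = ∑ j ∈ Finset.range n, A (j + 1) := by
    rw [Finset.sum_range_succ, hA, add_zero]
  rw [h2]
  ring

lemma key {a b c d : ℝ} (hdet : a * d - b * c = 1) {k : ℕ} (hk : 1 ≤ k)
    {f : ℂ → ℂ} (hf : DifferentiableOn ℂ f UpperHalf) :
    ∀ n : ℕ, ∀ z ∈ UpperHalf, Dop^[n] (slashAct k f a b c d) z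
      = ∑ j ∈ Finset.range (n + 1),
          Wc k n j * (-(c : ℂ) / (2 * (Real.pi : ℂ) * I)) ^ (n - j)
            * ((c : ℂ) * z + (d : ℂ)) ^ (-((k : ℤ) + n + j))
            * Dop^[j] f (mob a b c d z) := by
  intro n
  induction n with
  | zero =>
    intro z hz
    simp only [Function.iterate_zero, id_eq, Finset.sum_range_one, Wc_self, Nat.sub_zero,
      pow_zero, one_mul, Nat.cast_zero, mul_one]
    show slashAct k f a b c d z = _
    rw [slashAct]
    norm_num [Wc_self, mob]
  | succ n ih =>
    intro z hz
    have wne := denom_ne hdet hz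
    have hσz := mob_mem hdet hz
    set E : ℂ := -(c : ℂ) / (2 * (Real.pi : ℂ) * I) with hE
    set w : ℂ := (c : ℂ) * z + (d : ℂ) with hw
    -- the function computing Dop^[n] of the slash on UpperHalf
    set F : ℂ → ℂ := fun x => ∑ j ∈ Finset.range (n + 1),
      Wc k n j * E ^ (n - j) * ((c : ℂ) * x + (d : ℂ)) ^ (-((k : ℤ) + n + j))
        * Dop^[j] f (mob a b c d x) with hF
    have hev : Dop^[n] (slashAct k f a b c d) =ᶠ[nhds z] F :=
      Filter.eventuallyEq_of_mem (upperHalf_isOpen.mem_nhds hz) (fun x hx => ih x hx)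
    have hwD : HasDerivAt (fun x : ℂ => (c : ℂ) * x + (d : ℂ)) (c : ℂ) z := by
      simpa using ((hasDerivAt_id z).const_mul (c : ℂ)).add_const (d : ℂ)
    -- derivative of each summand
    have hterm : ∀ j ∈ Finset.range (n + 1),
        HasDerivAt (fun x => Wc k n j * E ^ (n - j)
            * ((c : ℂ) * x + (d : ℂ)) ^ (-((k : ℤ) + n + j))
            * Dop^[j] f (mob a b c d x))
          ((Wc k n j * E ^ (n - j) * (((-((k : ℤ) + n + j) : ℤ) : ℂ)
              * w ^ (-((k : ℤ) + n + j) - 1) * (c : ℂ))) * Dop^[j] f (mob a b c d z)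
            + (Wc k n j * E ^ (n - j) * w ^ (-((k : ℤ) + n + j)))
              * (deriv (Dop^[j] f) (mob a b c d z) * ((w ^ 2)⁻¹))) z := by
      intro j _
      have hzp : HasDerivAt (fun x : ℂ => ((c : ℂ) * x + (d : ℂ)) ^ (-((k : ℤ) + n + j)))
          ((((-((k : ℤ) + n + j) : ℤ) : ℂ)) * w ^ (-((k : ℤ) + n + j) - 1) * (c : ℂ)) z := by
        have h0 := (hasDerivAt_zpow (-((k : ℤ) + n + j)) w (Or.inl wne)).comp z hwD
        simpa [Function.comp_def, mul_assoc] using h0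
      have hdiffj : DifferentiableAt ℂ (Dop^[j] f) (mob a b c d z) :=
        (Dop_iter_diffOn hf j).differentiableAt (upperHalf_isOpen.mem_nhds hσz)
      have hcomp : HasDerivAt (fun x => Dop^[j] f (mob a b c d x))
          (deriv (Dop^[j] f) (mob a b c d z) * ((w ^ 2)⁻¹)) z := by
        have h0 := (hdiffj.hasDerivAt).comp z (mob_hasDerivAt hdet hz)
        simpa [Function.comp_def] using h0
      have := (hzp.const_mul (Wc k n j * E ^ (n - j))).mul hcomp
      refine this.congr_deriv ?_; ring
    have hFD : HasDerivAt F (∑ j ∈ Finset.range (n + 1),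
        ((Wc k n j * E ^ (n - j) * (((-((k : ℤ) + n + j) : ℤ) : ℂ)
            * w ^ (-((k : ℤ) + n + j) - 1) * (c : ℂ))) * Dop^[j] f (mob a b c d z)
          + (Wc k n j * E ^ (n - j) * w ^ (-((k : ℤ) + n + j)))
            * (deriv (Dop^[j] f) (mob a b c d z) * ((w ^ 2)⁻¹)))) z :=
      HasDerivAt.fun_sum hterm
    have hder : Dop^[n + 1] (slashAct k f a b c d) z
        = (1 / (2 * (Real.pi : ℂ) * I)) * deriv F z := by
      rw [Function.iterate_succ_apply']
      show (1 / (2 * (Real.pi : ℂ) * I)) * deriv (Dop^[n] (slashAct k f a b c d)) z = _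
      rw [hev.deriv_eq]
    rw [hder, hFD.deriv]
    rw [Finset.mul_sum]
    have hstep : ∀ j ∈ Finset.range (n + 1),
        (1 / (2 * (Real.pi : ℂ) * I)) *
          ((Wc k n j * E ^ (n - j) * (((-((k : ℤ) + n + j) : ℤ) : ℂ)
              * w ^ (-((k : ℤ) + n + j) - 1) * (c : ℂ))) * Dop^[j] f (mob a b c d z)
            + (Wc k n j * E ^ (n - j) * w ^ (-((k : ℤ) + n + j)))
              * (deriv (Dop^[j] f) (mob a b c d z) * ((w ^ 2)⁻¹)))
        = Wc k n j * ((k : ℂ) + n + j) * E ^ (n + 1 - j) * w ^ (-((k : ℤ) + n + j) - 1)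
              * Dop^[j] f (mob a b c d z)
          + Wc k n j * E ^ (n - j) * w ^ (-((k : ℤ) + n + j) + -2)
              * Dop^[j + 1] f (mob a b c d z) := by
      intro j hj
      have hjn : j ≤ n := by simpa [Nat.lt_succ_iff] using hj
      have hpow : E ^ (n + 1 - j) = E ^ (n - j) * E := by
        rw [← pow_succ]
        congr 1
        omega
      have hw2 : ((w ^ 2)⁻¹ : ℂ) = w ^ (-2 : ℤ) := by
        rw [zpow_neg]
        norm_cast
      have hzz : w ^ (-((k : ℤ) + n + j) + -2) = w ^ (-((k : ℤ) + n + j)) * w ^ (-2 : ℤ) :=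
        zpow_add₀ wne _ _
      rw [deriv_Dop_iter f j, hpow, hw2, hzz, hE]
      have hc : (1 / (2 * (Real.pi : ℂ) * I)) * (2 * (Real.pi : ℂ) * I) = 1 := by
        rw [one_div, inv_mul_cancel₀ twoPiI_ne]
      push_cast
      linear_combination (Wc k n j * (-(c : ℂ) / (2 * (Real.pi : ℂ) * I)) ^ (n - j)
        * w ^ (-((k : ℤ) + n + j)) * w ^ (-2 : ℤ) * Dop^[j + 1] f (mob a b c d z)) * hc
    rw [Finset.sum_congr rfl hstep, Finset.sum_add_distrib]
    apply regroup n
    · -- T 0 = A 0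
      rw [Wc_succ_zero hk]
      rw [show (-((k : ℤ) + (↑(n + 1) : ℕ) + ((0 : ℕ) : ℤ))) = -((k : ℤ) + n + ((0 : ℕ) : ℤ)) - 1
        by push_cast; ring]
      push_cast
      ring
    · -- A (n+1) = 0
      rw [Wc_zero_of_lt k (Nat.lt_succ_self n)]
      ring
    · -- recurrence
      intro j hjn'
      have hjn : j ≤ n := by omega
      rw [Wc_rec hk hjn]
      have he1 : n + 1 - (j + 1) = n - j := by omega
      have he2 : (-((k : ℤ) + (↑(n + 1) : ℕ) + (↑(j + 1) : ℕ))) = -((k : ℤ) + n + j) + -2 := by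
        push_cast
        ring
      have he3 : (-((k : ℤ) + n + (↑(j + 1) : ℕ)) - 1) = -((k : ℤ) + n + j) + -2 := by
        push_cast
        ring
      rw [he1, he2, he3]
      push_cast
      ring

lemma alt_choose_sum (M : ℕ) :
    ∑ i ∈ Finset.range (M + 1), (-1 : ℂ) ^ i * (M.choose i : ℂ)
      = if M = 0 then 1 else 0 := by
  have h := Int.alternating_sum_range_choose (n := M)
  have h2 := congrArg (fun t : ℤ => (t : ℂ)) h
  push_cast at h2
  simpa [apply_ite] using h2

set_option maxHeartbeats 2000000 in
lemma coeff_id {k₁ k₂ m j l r : ℕ} (hk₁ : 1 ≤ k₁) (hk₂ : 1 ≤ k₂) (hjr : j ≤ r)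
    (hrl : r + l ≤ m) :
    ((m + k₁ - 1).choose (m - r) : ℂ) * ((m + k₂ - 1).choose r : ℂ)
        * Wc k₁ r j * Wc k₂ (m - r) l
      = ((m + k₁ - 1).choose (m - j) : ℂ) * ((m + k₂ - 1).choose j : ℂ)
        * Wc k₂ (m - j) l * ((m - j - l).choose (r - j) : ℂ) := by
  obtain ⟨K₁, rfl⟩ := Nat.exists_eq_add_of_le hk₁
  obtain ⟨K₂, rfl⟩ := Nat.exists_eq_add_of_le hk₂
  obtain ⟨p, rfl⟩ := Nat.exists_eq_add_of_le hjr
  obtain ⟨q, hq⟩ := Nat.exists_eq_add_of_le hrl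
  subst hq
  simp only [Wc]
  -- normalize all Nat-subtraction arguments
  rw [show j + p + l + q + (1 + K₁) - 1 = K₁ + (j + p + l + q) from by omega,
      show j + p + l + q - (j + p) = l + q from by omega,
      show j + p + l + q + (1 + K₂) - 1 = K₂ + (j + p + l + q) from by omega,
      show j + p + l + q - j = p + l + q from by omega,
      show p + l + q - l = p + q from by omega,
      show j + p - j = p from by omega,
      show 1 + K₁ + (j + p) - 1 = K₁ + (j + p) from by omega,
      show 1 + K₁ + j - 1 = K₁ + j from by omega,
      show 1 + K₂ + (l + q) - 1 = K₂ + (l + q) from by omega,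
      show 1 + K₂ + l - 1 = K₂ + l from by omega,
      show 1 + K₂ + (p + l + q) - 1 = K₂ + (p + l + q) from by omega]
  -- expand all binomial coefficients
  rw [Nat.cast_choose ℂ (show l + q ≤ K₁ + (j + p + l + q) from by omega),
      Nat.cast_choose ℂ (show j + p ≤ K₂ + (j + p + l + q) from by omega),
      Nat.cast_choose ℂ (show p + l + q ≤ K₁ + (j + p + l + q) from by omega),
      Nat.cast_choose ℂ (show j ≤ K₂ + (j + p + l + q) from by omega),
      Nat.cast_choose ℂ (show j ≤ j + p from by omega),
      Nat.cast_choose ℂ (show l ≤ l + q from by omega),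
      Nat.cast_choose ℂ (show l ≤ p + l + q from by omega),
      Nat.cast_choose ℂ (show p ≤ p + q from by omega)]
  rw [show K₁ + (j + p + l + q) - (l + q) = K₁ + j + p from by omega,
      show K₂ + (j + p + l + q) - (j + p) = K₂ + l + q from by omega,
      show K₁ + (j + p + l + q) - (p + l + q) = K₁ + j from by omega,
      show K₂ + (j + p + l + q) - j = K₂ + p + l + q from by omega,
      show j + p - j = p from by omega,
      show l + q - l = q from by omega,
      show p + l + q - l = p + q from by omega,
      show p + q - p = q from by omega]
  rw [show K₁ + (j + p) = K₁ + j + p from by omega,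
      show K₂ + (l + q) = K₂ + l + q from by omega,
      show K₂ + (p + l + q) = K₂ + p + l + q from by omega]
  simp only [div_mul_eq_mul_div, mul_div_assoc', div_div, div_mul_div_comm]
  rw [div_eq_div_iff (by apply_rules [mul_ne_zero, fact_ne]) (by apply_rules [mul_ne_zero, fact_ne])]
  ring

set_option maxHeartbeats 2000000 in
lemma inner_sum (E w : ℂ) (wne : w ≠ 0) {k₁ k₂ m j l : ℕ}
    (hk₁ : 1 ≤ k₁) (hk₂ : 1 ≤ k₂) (hj : j ≤ m) (hl : l ≤ m) (Gv Hv : ℂ) :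
    ∑ r ∈ Finset.range (m + 1),
        ((-1 : ℂ) ^ r * ((m + k₁ - 1).choose (m - r) : ℂ) * ((m + k₂ - 1).choose r : ℂ))
          * (Wc k₁ r j * E ^ (r - j) * w ^ (-((k₁ : ℤ) + r + j)) * Gv)
          * (Wc k₂ (m - r) l * E ^ ((m - r) - l) * w ^ (-((k₂ : ℤ) + (↑(m - r) : ℕ) + l)) * Hv)
      = if l = m - j then
          ((-1 : ℂ) ^ j * ((m + k₁ - 1).choose (m - j) : ℂ) * ((m + k₂ - 1).choose j : ℂ))
            * (w ^ (-((k₁ : ℤ) + k₂ + 2 * m)) * Gv * Hv)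
        else 0 := by
  by_cases hml : j + l ≤ m
  · set M := m - j - l with hM
    set Q0 : ℂ := ((m + k₁ - 1).choose (m - j) : ℂ) * ((m + k₂ - 1).choose j : ℂ)
      * Wc k₂ (m - j) l * E ^ M * w ^ (-((k₁ : ℤ) + k₂ + m + j + l)) * Gv * Hv with hQ0
    have hTS : ∀ r ∈ Finset.range (m + 1),
        ((-1 : ℂ) ^ r * ((m + k₁ - 1).choose (m - r) : ℂ) * ((m + k₂ - 1).choose r : ℂ))
          * (Wc k₁ r j * E ^ (r - j) * w ^ (-((k₁ : ℤ) + r + j)) * Gv)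
          * (Wc k₂ (m - r) l * E ^ ((m - r) - l) * w ^ (-((k₂ : ℤ) + (↑(m - r) : ℕ) + l)) * Hv)
        = if j ≤ r then (-1 : ℂ) ^ r * (M.choose (r - j) : ℂ) * Q0 else 0 := by
      intro r hr
      have hrm : r ≤ m := by simpa [Nat.lt_succ_iff] using hr
      by_cases hjr : j ≤ r
      · by_cases hrl : r + l ≤ m
        · rw [if_pos hjr]
          have hpow : E ^ (r - j) * E ^ ((m - r) - l) = E ^ M := by
            rw [← pow_add]
            congr 1
            omega
          have hzp : w ^ (-((k₁ : ℤ) + r + j)) * w ^ (-((k₂ : ℤ) + (↑(m - r) : ℕ) + l))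
              = w ^ (-((k₁ : ℤ) + k₂ + m + j + l)) := by
            rw [← zpow_add₀ wne]
            congr 1
            push_cast
            omega
          have hco := coeff_id (m := m) (j := j) (l := l) (r := r) hk₁ hk₂ hjr hrl
          calc ((-1 : ℂ) ^ r * ((m + k₁ - 1).choose (m - r) : ℂ) * ((m + k₂ - 1).choose r : ℂ))
              * (Wc k₁ r j * E ^ (r - j) * w ^ (-((k₁ : ℤ) + r + j)) * Gv)
              * (Wc k₂ (m - r) l * E ^ ((m - r) - l) * w ^ (-((k₂ : ℤ) + (↑(m - r) : ℕ) + l)) * Hv)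
              = (((m + k₁ - 1).choose (m - r) : ℂ) * ((m + k₂ - 1).choose r : ℂ)
                  * Wc k₁ r j * Wc k₂ (m - r) l)
                * ((-1 : ℂ) ^ r * (E ^ (r - j) * E ^ ((m - r) - l))
                  * (w ^ (-((k₁ : ℤ) + r + j)) * w ^ (-((k₂ : ℤ) + (↑(m - r) : ℕ) + l))) * Gv * Hv) := by
                ring
            _ = (-1 : ℂ) ^ r * (M.choose (r - j) : ℂ) * Q0 := by
                rw [hco, hpow, hzp, hQ0]
                ring
        · rw [if_pos hjr, Wc_zero_of_lt k₂ (show m - r < l from by omega),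
            Nat.choose_eq_zero_of_lt (show M < r - j from by omega)]
          push_cast
          ring
      · rw [if_neg hjr, Wc_zero_of_lt k₁ (show r < j from by omega)]
        ring
    rw [Finset.sum_congr rfl hTS]
    rw [Finset.range_eq_Ico, ← Finset.sum_Ico_consecutive _ (Nat.zero_le j) (show j ≤ m + 1 from by omega)]
    have hzero : ∑ r ∈ Finset.Ico 0 j, (if j ≤ r then (-1 : ℂ) ^ r * (M.choose (r - j) : ℂ) * Q0 else 0) = 0 :=
      Finset.sum_eq_zero fun r hr => if_neg (by simp at hr; omega)
    have hpos : ∑ r ∈ Finset.Ico j (m + 1), (if j ≤ r then (-1 : ℂ) ^ r * (M.choose (r - j) : ℂ) * Q0 else 0)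
        = ∑ r ∈ Finset.Ico j (m + 1), (-1 : ℂ) ^ r * (M.choose (r - j) : ℂ) * Q0 :=
      Finset.sum_congr rfl fun r hr => if_pos (by simp at hr; omega)
    rw [hzero, hpos, zero_add, Finset.sum_Ico_eq_sum_range]
    have hred : ∀ i ∈ Finset.range (m + 1 - j),
        (-1 : ℂ) ^ (j + i) * (M.choose (j + i - j) : ℂ) * Q0
          = ((-1 : ℂ) ^ j * Q0) * ((-1 : ℂ) ^ i * (M.choose i : ℂ)) := by
      intro i _
      rw [show j + i - j = i from by omega, pow_add]
      ring
    rw [Finset.sum_congr rfl hred, ← Finset.mul_sum]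
    have hsub : ∑ i ∈ Finset.range (m + 1 - j), ((-1 : ℂ) ^ i * (M.choose i : ℂ))
        = ∑ i ∈ Finset.range (M + 1), ((-1 : ℂ) ^ i * (M.choose i : ℂ)) := by
      refine (Finset.sum_subset (Finset.range_subset_range.2 (show M + 1 ≤ m + 1 - j from by omega))
        fun x hx hnx => ?_).symm
      rw [Nat.choose_eq_zero_of_lt (by simp at hx hnx; omega)]
      ring
    rw [hsub, alt_choose_sum]
    by_cases hcond : l = m - j
    · have hM0 : M = 0 := by omega
      rw [if_pos hcond, hM0, if_pos rfl, hQ0]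
      have h1 : Wc k₂ (m - j) l = 1 := by rw [hcond, Wc_self]
      have h2 : (-((k₁ : ℤ) + k₂ + m + j + l)) = -((k₁ : ℤ) + k₂ + 2 * m) := by
        push_cast
        omega
      rw [h1, h2, hM0]
      ring
    · have hM0 : M ≠ 0 := by omega
      rw [if_neg hcond, if_neg hM0]
      ring
  · rw [if_neg (show ¬ l = m - j from by omega)]
    refine Finset.sum_eq_zero fun r hr => ?_
    have hrm : r ≤ m := by simpa [Nat.lt_succ_iff] using hr
    by_cases hjr : j ≤ r
    · rw [Wc_zero_of_lt k₂ (show m - r < l from by omega)]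
      ring
    · rw [Wc_zero_of_lt k₁ (show r < j from by omega)]
      ring

end RC

open RC

set_option maxHeartbeats 2000000 in
/-- For integers `k₁, k₂ ≥ 1`, `m ≥ 0`, holomorphic `g, h : ℍ → ℂ` and `γ ∈ SL₂(ℝ)`:
`[g, h]_m |_{k₁+k₂+2m} γ = [ g|_{k₁} γ , h|_{k₂} γ ]_m` on ℍ. -/
theorem rankin_cohen_stmt16 (k₁ k₂ : ℕ) (hk₁ : 1 ≤ k₁) (hk₂ : 1 ≤ k₂) (m : ℕ)
    (g h : ℂ → ℂ)
    (hg : DifferentiableOn ℂ g UpperHalf) (hh : DifferentiableOn ℂ h UpperHalf)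
    (a b c d : ℝ) (hdet : a * d - b * c = 1) :
    ∀ z ∈ UpperHalf,
      slashAct ((k₁ : ℤ) + k₂ + 2 * m) (RCbracket k₁ k₂ m g h) a b c d z =
        RCbracket k₁ k₂ m (slashAct k₁ g a b c d) (slashAct k₂ h a b c d) z := by
  intro z hz
  have wne := denom_ne hdet hz
  have hσz := mob_mem hdet hz
  set E : ℂ := -(c : ℂ) / (2 * (Real.pi : ℂ) * I) with hE
  set w : ℂ := (c : ℂ) * z + (d : ℂ) with hw
  -- rewrite the right-hand side using the key formula
  have hkey : RCbracket k₁ k₂ m (slashAct k₁ g a b c d) (slashAct k₂ h a b c d) z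
      = ∑ r ∈ Finset.range (m + 1),
          ((-1 : ℂ) ^ r * ((m + k₁ - 1).choose (m - r) : ℂ) * ((m + k₂ - 1).choose r : ℂ))
            * (∑ j ∈ Finset.range (r + 1),
                Wc k₁ r j * E ^ (r - j) * w ^ (-((k₁ : ℤ) + r + j)) * Dop^[j] g (mob a b c d z))
            * (∑ l ∈ Finset.range ((m - r) + 1),
                Wc k₂ (m - r) l * E ^ ((m - r) - l) * w ^ (-((k₂ : ℤ) + (↑(m - r) : ℕ) + l))
                  * Dop^[l] h (mob a b c d z)) := by
    rw [RCbracket]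
    refine Finset.sum_congr rfl fun r _ => ?_
    rw [key hdet hk₁ hg r z hz, key hdet hk₂ hh (m - r) z hz]
    try ring
  rw [hkey]
  -- extend the inner sums to `range (m+1)` and expand the product
  have h1 : ∀ r ∈ Finset.range (m + 1),
      ((-1 : ℂ) ^ r * ((m + k₁ - 1).choose (m - r) : ℂ) * ((m + k₂ - 1).choose r : ℂ))
        * (∑ j ∈ Finset.range (r + 1),
            Wc k₁ r j * E ^ (r - j) * w ^ (-((k₁ : ℤ) + r + j)) * Dop^[j] g (mob a b c d z))
        * (∑ l ∈ Finset.range ((m - r) + 1),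
            Wc k₂ (m - r) l * E ^ ((m - r) - l) * w ^ (-((k₂ : ℤ) + (↑(m - r) : ℕ) + l))
              * Dop^[l] h (mob a b c d z))
      = ∑ j ∈ Finset.range (m + 1), ∑ l ∈ Finset.range (m + 1),
          ((-1 : ℂ) ^ r * ((m + k₁ - 1).choose (m - r) : ℂ) * ((m + k₂ - 1).choose r : ℂ))
            * (Wc k₁ r j * E ^ (r - j) * w ^ (-((k₁ : ℤ) + r + j)) * Dop^[j] g (mob a b c d z))
            * (Wc k₂ (m - r) l * E ^ ((m - r) - l) * w ^ (-((k₂ : ℤ) + (↑(m - r) : ℕ) + l))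
                * Dop^[l] h (mob a b c d z)) := by
    intro r hr
    have hrm : r ≤ m := by simpa [Nat.lt_succ_iff] using hr
    rw [Finset.sum_subset (Finset.range_subset_range.2 (show r + 1 ≤ m + 1 from by omega))
        (fun x hx hnx => by
          rw [Wc_zero_of_lt k₁ (show r < x from by simp at hx hnx; omega)]
          try ring),
      Finset.sum_subset (Finset.range_subset_range.2 (show (m - r) + 1 ≤ m + 1 from by omega))
        (fun x hx hnx => by
          rw [Wc_zero_of_lt k₂ (show m - r < x from by simp at hx hnx; omega)]
          try ring)]
    simp only [Finset.mul_sum, Finset.sum_mul]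
    rw [Finset.sum_comm]
    try exact Finset.sum_congr rfl fun j _ => Finset.sum_congr rfl fun l _ => by ring
  rw [Finset.sum_congr rfl h1, Finset.sum_comm]
  have h2 : ∀ j ∈ Finset.range (m + 1),
      (∑ r ∈ Finset.range (m + 1), ∑ l ∈ Finset.range (m + 1),
        ((-1 : ℂ) ^ r * ((m + k₁ - 1).choose (m - r) : ℂ) * ((m + k₂ - 1).choose r : ℂ))
          * (Wc k₁ r j * E ^ (r - j) * w ^ (-((k₁ : ℤ) + r + j)) * Dop^[j] g (mob a b c d z))
          * (Wc k₂ (m - r) l * E ^ ((m - r) - l) * w ^ (-((k₂ : ℤ) + (↑(m - r) : ℕ) + l))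
              * Dop^[l] h (mob a b c d z)))
      = ∑ l ∈ Finset.range (m + 1),
          if l = m - j then
            ((-1 : ℂ) ^ j * ((m + k₁ - 1).choose (m - j) : ℂ) * ((m + k₂ - 1).choose j : ℂ))
              * (w ^ (-((k₁ : ℤ) + k₂ + 2 * m)) * Dop^[j] g (mob a b c d z)
                  * Dop^[m - j] h (mob a b c d z))
          else 0 := by
    intro j hj
    have hjm : j ≤ m := by simpa [Nat.lt_succ_iff] using hj
    rw [Finset.sum_comm]
    refine Finset.sum_congr rfl fun l hl => ?_
    have hlm : l ≤ m := by simpa [Nat.lt_succ_iff] using hl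
    rw [inner_sum E w wne hk₁ hk₂ hjm hlm]
    by_cases hc : l = m - j
    · rw [if_pos hc, if_pos hc, hc]
    · rw [if_neg hc, if_neg hc]
  rw [Finset.sum_congr rfl h2]
  have h3 : ∀ j ∈ Finset.range (m + 1),
      (∑ l ∈ Finset.range (m + 1),
          if l = m - j then
            ((-1 : ℂ) ^ j * ((m + k₁ - 1).choose (m - j) : ℂ) * ((m + k₂ - 1).choose j : ℂ))
              * (w ^ (-((k₁ : ℤ) + k₂ + 2 * m)) * Dop^[j] g (mob a b c d z)
                  * Dop^[m - j] h (mob a b c d z))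
          else 0)
      = ((-1 : ℂ) ^ j * ((m + k₁ - 1).choose (m - j) : ℂ) * ((m + k₂ - 1).choose j : ℂ))
          * (w ^ (-((k₁ : ℤ) + k₂ + 2 * m)) * Dop^[j] g (mob a b c d z)
              * Dop^[m - j] h (mob a b c d z)) := by
    intro j hj
    have hjm : j ≤ m := by simpa [Nat.lt_succ_iff] using hj
    rw [Finset.sum_ite_eq' (Finset.range (m + 1)) (m - j)]
    rw [if_pos (Finset.mem_range.2 (by omega))]
  rw [Finset.sum_congr rfl h3]
  -- now compute the left-hand side
  show w ^ (-((k₁ : ℤ) + k₂ + 2 * m)) * RCbracket k₁ k₂ m g h (mob a b c d z) = _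
  rw [RCbracket, Finset.mul_sum]
  refine Finset.sum_congr rfl fun j _ => ?_
  ring
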